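/- Let R be a unital associative ring, σ : R → R a ring endomorphism, and δ : R → R a σ-derivation. If the Ore extension R[x;σ,δ] is a simple ring, then R is σ-δ-simple. -/

import Mathlib

/-- `δ` is a `σ`-derivation of `R`: it is additive and satisfies the twisted Leibniz rule
`δ(ab) = σ(a)δ(b) + δ(a)b`. -/
def IsSigmaDerivation {R : Type*} [Ring R] (σ : R →+* R) (δ : R → R) : Prop :=
  (∀ a b : R, δ (a + b) = δ a + δ b) ∧ ∀ a b : R, δ (a * b) = σ a * δ b + δ a * b

/-- `S`, together with the ring morphism `f : R →+* S` and the element `x : S`, is an Ore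
extension `R[x;σ,δ]`: the powers `1, x, x², …` form a basis of `S` as a left `R`-module
(i.e. every element of `S` is, in a unique way, a finite sum `Σᵢ f(aᵢ) xⁱ`), and the
commutation rule `x·r = σ(r)·x + δ(r)` holds for all `r ∈ R`. -/
structure IsOreExtension {R S : Type*} [Ring R] [Ring S]
    (σ : R →+* R) (δ : R → R) (f : R →+* S) (x : S) : Prop where
  basis : Function.Bijective fun a : ℕ →₀ R => a.sum fun i r => f r * x ^ i
  rel : ∀ r : R, x * f r = f (σ r) * x + f (δ r)

/-- `R` is `σ`-`δ`-simple: the only two-sided ideals `J` of `R` with `σ(J) ⊆ J` and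
`δ(J) ⊆ J` are `{0}` and `R`. -/
def IsSigmaDeltaSimple {R : Type*} [Ring R] (σ : R →+* R) (δ : R → R) : Prop :=
  ∀ J : TwoSidedIdeal R, (∀ a ∈ J, σ a ∈ J) → (∀ a ∈ J, δ a ∈ J) → J = ⊥ ∨ J = ⊤

/-- `R` is `δ`-simple: the only two-sided ideals `J` of `R` with `δ(J) ⊆ J` are `{0}`
and `R`. -/
def IsDeltaSimple {R : Type*} [Ring R] (δ : R → R) : Prop :=
  ∀ J : TwoSidedIdeal R, (∀ a ∈ J, δ a ∈ J) → J = ⊥ ∨ J = ⊤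

set_option maxHeartbeats 1000000 in
/-- If the Ore extension `R[x;σ,δ]` is simple, then `R` is `σ`-`δ`-simple. -/
theorem stmt_8 {R S : Type*} [Ring R] [Ring S] (σ : R →+* R) (δ : R → R)
    (hδ : IsSigmaDerivation σ δ) (f : R →+* S) (x : S)
    (hS : IsOreExtension σ δ f x) (hsimple : IsSimpleRing S) :
    IsSigmaDeltaSimple σ δ := by
  intro J hσJ hδJ
  set φ : (ℕ →₀ R) → S := fun a => a.sum fun i r => f r * x ^ i with hφ
  have φ_add : ∀ a b : ℕ →₀ R, φ (a + b) = φ a + φ b := by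
    intro a b
    simp only [hφ]
    exact Finsupp.sum_add_index' (fun i => by simp) (fun i r s => by simp [add_mul])
  have φ_single : ∀ (i : ℕ) (r : R), φ (Finsupp.single i r) = f r * x ^ i := by
    intro i r
    simp [hφ, Finsupp.sum_single_index]
  have φ_smul : ∀ (r : R) (a : ℕ →₀ R), φ (r • a) = f r * φ a := by
    intro r a
    rw [hφ]
    simp only
    rw [Finsupp.sum_smul_index (fun i => by simp), Finsupp.mul_sum]
    simp [mul_assoc]
  have single_mem : ∀ (i j : ℕ) (r : R), r ∈ J → Finsupp.single i r j ∈ J := by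
    intro i j r hr
    rcases eq_or_ne i j with rfl | h
    · simpa using hr
    · rw [Finsupp.single_apply, if_neg h]; exact J.zero_mem
  set C : Set S := {s | ∃ a : ℕ →₀ R, (∀ i, a i ∈ J) ∧ s = φ a} with hC
  have zeroC : (0 : S) ∈ C := ⟨0, fun i => by simp [J.zero_mem], by simp [hφ]⟩
  have addC : ∀ {s t : S}, s ∈ C → t ∈ C → s + t ∈ C := by
    rintro s t ⟨a, ha, rfl⟩ ⟨b, hb, rfl⟩
    exact ⟨a + b, fun i => J.add_mem (ha i) (hb i), (φ_add a b).symm⟩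
  have negC : ∀ {s : S}, s ∈ C → -s ∈ C := by
    rintro s ⟨a, ha, rfl⟩
    refine ⟨-a, fun i => J.neg_mem (ha i), ?_⟩
    have h1 := φ_add a (-a)
    simp only [add_neg_cancel] at h1
    have h0 : φ 0 = 0 := by simp [hφ]
    rw [h0] at h1
    exact (eq_neg_of_add_eq_zero_right h1.symm).symm
  have sumC : ∀ {ι : Type} (t : Finset ι) (g : ι → S), (∀ i ∈ t, g i ∈ C) →
      (∑ i ∈ t, g i) ∈ C := by
    intro ι t g hg
    classical
    induction t using Finset.induction_on with
    | empty => simpa using zeroC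
    | insert i t' hnotmem ih =>
      rw [Finset.sum_insert hnotmem]
      exact addC (hg i (Finset.mem_insert_self i t'))
        (ih fun j hj => hg j (Finset.mem_insert_of_mem hj))
  have fmulC : ∀ (r : R) {s : S}, s ∈ C → f r * s ∈ C := by
    rintro r s ⟨a, ha, rfl⟩
    exact ⟨r • a, fun i => by simpa using J.mul_mem_left r (a i) (ha i), (φ_smul r a).symm⟩
  have xmulC : ∀ {s : S}, s ∈ C → x * s ∈ C := by
    rintro s ⟨a, ha, rfl⟩
    rw [hφ]
    simp only [Finsupp.sum, Finset.mul_sum]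
    refine sumC _ _ fun i hi => ?_
    have key : x * (f (a i) * x ^ i) = f (σ (a i)) * x ^ (i + 1) + f (δ (a i)) * x ^ i := by
      rw [← mul_assoc, hS.rel (a i), add_mul, pow_succ', mul_assoc]
    rw [key]
    exact addC ⟨Finsupp.single (i + 1) (σ (a i)),
        fun j => single_mem _ _ _ (hσJ _ (ha i)), (φ_single _ _).symm⟩
      ⟨Finsupp.single i (δ (a i)),
        fun j => single_mem _ _ _ (hδJ _ (ha i)), (φ_single _ _).symm⟩
  have xpowmulC : ∀ (n : ℕ) {s : S}, s ∈ C → x ^ n * s ∈ C := by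
    intro n
    induction n with
    | zero => intro s hs; simpa using hs
    | succ n ih =>
      intro s hs
      have h2 := xmulC (ih hs)
      rw [← mul_assoc, ← pow_succ'] at h2
      exact h2
  have coefmulC : ∀ (r : R), r ∈ J → ∀ (s : S), f r * s ∈ C := by
    intro r hr s
    obtain ⟨c, rfl⟩ := hS.basis.surjective s
    exact ⟨r • c, fun i => by simpa using J.mul_mem_right r (c i) hr, (φ_smul r c).symm⟩
  have rightC : ∀ {t : S} (s : S), t ∈ C → t * s ∈ C := by
    rintro t s ⟨a, ha, rfl⟩
    rw [hφ]
    simp only [Finsupp.sum, Finset.sum_mul]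
    refine sumC _ _ fun i hi => ?_
    rw [mul_assoc]
    exact coefmulC (a i) (ha i) (x ^ i * s)
  have leftC : ∀ (s : S) {t : S}, t ∈ C → s * t ∈ C := by
    intro s t ht
    obtain ⟨b, rfl⟩ := hS.basis.surjective s
    show (b.sum fun i r => f r * x ^ i) * t ∈ C
    simp only [Finsupp.sum, Finset.sum_mul]
    refine sumC _ _ fun i hi => ?_
    rw [mul_assoc]
    exact fmulC (b i) (xpowmulC i ht)
  let I : TwoSidedIdeal S := TwoSidedIdeal.mk' C zeroC addC negC
    (fun {u v} hv => leftC u hv) (fun {u v} hu => rightC v hu)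
  have memI : ∀ s : S, s ∈ I ↔ s ∈ C := TwoSidedIdeal.mem_mk' C _ _ _ _ _
  rcases hsimple.simple.eq_bot_or_eq_top I with hbot | htop
  · left
    refine le_antisymm ?_ bot_le
    intro r hr
    have hmem : f r ∈ I := by
      rw [memI]
      exact ⟨Finsupp.single 0 r, fun j => single_mem _ _ _ hr, by simp [φ_single]⟩
    rw [hbot, TwoSidedIdeal.mem_bot] at hmem
    have heq : φ (Finsupp.single 0 r) = φ 0 := by
      rw [φ_single]
      simp [hmem, hφ]
    have h2 := hS.basis.injective heq
    have hr0 : r = 0 := by simpa using DFunLike.congr_fun h2 0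
    simpa [TwoSidedIdeal.mem_bot] using hr0
  · right
    have h1 : (1 : S) ∈ I := by rw [htop]; exact TwoSidedIdeal.mem_top S
    rw [memI] at h1
    obtain ⟨a, ha, h1⟩ := h1
    have heq : φ (Finsupp.single 0 (1 : R)) = φ a := by
      rw [φ_single]; simpa using h1
    have h2 := hS.basis.injective heq
    have h10 : (1 : R) ∈ J := by
      have h3 := DFunLike.congr_fun h2 0
      simp only [Finsupp.single_eq_same] at h3
      rw [h3]; exact ha 0
    exact TwoSidedIdeal.one_mem_iff J |>.mp h10
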